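/- Let g : [0,1] → ℝ^k be square-integrable with Γ_s := ∫_s¹ g(t)g(t)ᵀ dt invertible for all 0 ≤ s < 1. Then for any ψ ∈ L²[0,1], the transformed function (𝓛ψ)(t) := ψ(t) − (∫_0^t ψ(s) g(s)ᵀ Γ_s⁻¹ ds) g(t) satisfies ∫_0¹ (𝓛ψ)(t) g(t)ᵀ dt = 0, i.e., 𝓛ψ is orthogonal to every coordinate of g. -/

import Mathlib

open MeasureTheory intervalIntegral

/-- With `Γ_s = ∫_s¹ g gᵀ dt` invertible for `s ∈ [0,1)`, the transform
`(𝓛ψ)(t) = ψ(t) − (∫_0^t ψ(s) g(s)ᵀ Γ_s⁻¹ ds) g(t)` satisfies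
`∫_0¹ (𝓛ψ)(t) g(t)ᵀ dt = 0`, i.e. `𝓛ψ` is orthogonal to every coordinate of `g`. -/
theorem stmt9 {k : ℕ} (g : ℝ → Fin k → ℝ) (ψ : ℝ → ℝ)
    (hgm : ∀ i, Measurable fun t => g t i) (hψm : Measurable ψ)
    (hg2 : ∀ i j, IntervalIntegrable (fun t => g t i * g t j) volume 0 1)
    (hψ2 : IntervalIntegrable (fun t => ψ t ^ 2) volume 0 1)
    (Γ : ℝ → Matrix (Fin k) (Fin k) ℝ)
    (hΓ : ∀ s, Γ s = fun i j => ∫ t in s..(1 : ℝ), g t i * g t j)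
    (hΓinv : ∀ s ∈ Set.Ico (0 : ℝ) 1, IsUnit (Γ s))
    (Lψ : ℝ → ℝ)
    (hLψ : ∀ t, Lψ t =
      ψ t - ∑ j, (∫ s in (0 : ℝ)..t, ∑ i, ψ s * g s i * (Γ s)⁻¹ i j) * g t j)
    -- absolute convergence / Fubini justification:
    (hFub : ∀ i j l, IntegrableOn
      (fun p : ℝ × ℝ => |ψ p.1 * g p.1 i * (Γ p.1)⁻¹ i l * g p.2 l * g p.2 j|)
      (Set.Ioc (0 : ℝ) 1 ×ˢ Set.Ioc (0 : ℝ) 1) volume) :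
    ∀ j, ∫ t in (0 : ℝ)..1, Lψ t * g t j = 0 := by
  intro j
  classical
  set S : Set ℝ := Set.Ioc (0 : ℝ) 1 with hS
  set μ : Measure ℝ := volume.restrict S with hμ
  have hSm : MeasurableSet S := measurableSet_Ioc
  -- basic integrabilities
  have hg2' : ∀ i i', Integrable (fun t => g t i * g t i') μ := fun i i' =>
    (intervalIntegrable_iff_integrableOn_Ioc_of_le zero_le_one).1 (hg2 i i')
  have hψ2' : Integrable (fun t => ψ t ^ 2) μ :=
    (intervalIntegrable_iff_integrableOn_Ioc_of_le zero_le_one).1 hψ2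
  -- continuity of Γ entries on [0,1]
  have hΓcont : ∀ i l, ContinuousOn (fun s => Γ s i l) (Set.Icc (0:ℝ) 1) := by
    intro i l
    have hint : IntegrableOn (fun t => g t i * g t l) (Set.uIcc (0:ℝ) 1) volume := by
      rw [Set.uIcc_of_le (zero_le_one' ℝ)]
      exact (integrableOn_Icc_iff_integrableOn_Ioc enorm_ne_top).2
        ((intervalIntegrable_iff_integrableOn_Ioc_of_le zero_le_one).1 (hg2 i l))
    have := intervalIntegral.continuousOn_primitive_interval_left (a := 0) (b := 1)
      (μ := volume) hint
    rw [Set.uIcc_of_le (zero_le_one' ℝ)] at this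
    simpa [hΓ] using this
  have hΓmat : ContinuousOn Γ (Set.Icc (0:ℝ) 1) := by
    apply continuousOn_pi.2
    intro i
    exact continuousOn_pi.2 fun l => hΓcont i l
  -- a.e.-measurability of entries of Γ⁻¹
  have hinv : ∀ i l, AEMeasurable (fun s => (Γ s)⁻¹ i l) μ := by
    intro i l
    have e : (fun s => (Γ s)⁻¹ i l) = fun s => ((Γ s).det)⁻¹ * (Γ s).adjugate i l := by
      funext s
      rw [Matrix.inv_def, Matrix.smul_apply, Ring.inverse_eq_inv, smul_eq_mul]
    rw [e]
    have hd : AEMeasurable (fun s => (Γ s).det) μ :=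
      (((Continuous.matrix_det continuous_id).comp_continuousOn hΓmat).mono
        Set.Ioc_subset_Icc_self).aemeasurable hSm
    have ha : AEMeasurable (fun s => (Γ s).adjugate i l) μ := by
      have hc : Continuous fun M : Matrix (Fin k) (Fin k) ℝ => M.adjugate i l :=
        (Continuous.matrix_adjugate continuous_id).matrix_elem i l
      exact ((hc.comp_continuousOn hΓmat).mono Set.Ioc_subset_Icc_self).aemeasurable hSm
    exact hd.inv.mul ha
  -- product measure
  have hprod : μ.prod μ = volume.restrict (S ×ˢ S) := Measure.prod_restrict S S
  -- the per-(i,l) integrand on the product space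
  have hfi : ∀ i l, Integrable
      (fun p : ℝ × ℝ => ψ p.1 * g p.1 i * (Γ p.1)⁻¹ i l * (g p.2 l * g p.2 j))
      (μ.prod μ) := by
    intro i l
    have hm : AEStronglyMeasurable
        (fun p : ℝ × ℝ => ψ p.1 * g p.1 i * (Γ p.1)⁻¹ i l * (g p.2 l * g p.2 j))
        (μ.prod μ) := by
      have h1 : AEMeasurable (fun s => ψ s * g s i * (Γ s)⁻¹ i l) μ :=
        ((hψm.mul (hgm i)).aemeasurable).mul (hinv i l)
      have h2 : AEMeasurable (fun t => g t l * g t j) μ :=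
        ((hgm l).mul (hgm j)).aemeasurable
      exact (((h1.aestronglyMeasurable.comp_fst).mul h2.aestronglyMeasurable.comp_snd)).aemeasurable.aestronglyMeasurable
    rw [← integrable_norm_iff hm]
    have h := hFub i j l
    rw [hprod]
    have : (fun p : ℝ × ℝ => ‖ψ p.1 * g p.1 i * (Γ p.1)⁻¹ i l * (g p.2 l * g p.2 j)‖)
        = fun p : ℝ × ℝ => |ψ p.1 * g p.1 i * (Γ p.1)⁻¹ i l * g p.2 l * g p.2 j| := by
      funext p
      rw [Real.norm_eq_abs]; ring_nf
    rw [this]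
    exact h
  -- indicator of the triangle {s ≤ t}
  set T : Set (ℝ × ℝ) := {p : ℝ × ℝ | p.1 ≤ p.2} with hT
  have hTm : MeasurableSet T := measurableSet_le measurable_fst measurable_snd
  set F : Fin k → ℝ × ℝ → ℝ := fun l =>
    T.indicator fun p => (∑ i, ψ p.1 * g p.1 i * (Γ p.1)⁻¹ i l) * (g p.2 l * g p.2 j) with hF
  have hFint : ∀ l, Integrable (F l) (μ.prod μ) := by
    intro l
    have : F l = fun p => ∑ i, T.indicator
        (fun p : ℝ × ℝ => ψ p.1 * g p.1 i * (Γ p.1)⁻¹ i l * (g p.2 l * g p.2 j)) p := by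
      funext p
      simp only [hF, Set.indicator_apply]
      split <;> simp [Finset.sum_mul]
    rw [this]
    exact integrable_finset_sum _ fun i _ => (hfi i l).indicator hTm
  -- key identity (1): inner integral in s, for t ∈ S
  have key1 : ∀ l, ∀ t ∈ S, (∫ s, F l (s, t) ∂μ)
      = (∫ s in (0:ℝ)..t, ∑ i, ψ s * g s i * (Γ s)⁻¹ i l) * (g t l * g t j) := by
    intro l t ht
    have e1 : (fun s => F l (s, t))
        = (Set.Iic t).indicator fun s => (∑ i, ψ s * g s i * (Γ s)⁻¹ i l) * (g t l * g t j) := by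
      funext s
      simp only [hF, hT, Set.indicator_apply, Set.mem_setOf_eq, Set.mem_Iic]
    rw [e1, MeasureTheory.integral_indicator measurableSet_Iic, hμ, Measure.restrict_restrict measurableSet_Iic]
    have e2 : Set.Iic t ∩ S = Set.Ioc 0 t := by
      ext x
      simp only [Set.mem_inter_iff, Set.mem_Iic, hS, Set.mem_Ioc]
      constructor
      · rintro ⟨hx, hx1, hx2⟩; exact ⟨hx1, hx⟩
      · rintro ⟨hx1, hx2⟩; exact ⟨hx2, hx1, hx2.trans ht.2⟩
    rw [e2, MeasureTheory.integral_mul_const, intervalIntegral.integral_of_le ht.1.le]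
  -- key identity (2): inner integral in t, for s ∈ S
  have key2 : ∀ l, ∀ s ∈ S, (∫ t, F l (s, t) ∂μ)
      = (∑ i, ψ s * g s i * (Γ s)⁻¹ i l) * Γ s l j := by
    intro l s hs
    have e1 : (fun t => F l (s, t))
        = (Set.Ici s).indicator fun t => (∑ i, ψ s * g s i * (Γ s)⁻¹ i l) * (g t l * g t j) := by
      funext t
      simp only [hF, hT, Set.indicator_apply, Set.mem_setOf_eq, Set.mem_Ici]
    rw [e1, MeasureTheory.integral_indicator measurableSet_Ici, hμ, Measure.restrict_restrict measurableSet_Ici]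
    have e2 : Set.Ici s ∩ S = Set.Icc s 1 := by
      ext x
      simp only [Set.mem_inter_iff, Set.mem_Ici, hS, Set.mem_Ioc, Set.mem_Icc]
      constructor
      · rintro ⟨hx, hx1, hx2⟩; exact ⟨hx, hx2⟩
      · rintro ⟨hx1, hx2⟩; exact ⟨hx1, hs.1.trans_le hx1, hx2⟩
    rw [e2, MeasureTheory.integral_const_mul, integral_Icc_eq_integral_Ioc,
      ← intervalIntegral.integral_of_le hs.2, hΓ]
  -- key identity (3): row sum against Γ gives back ψ g j, for s ∈ Ioo 0 1
  have key3 : ∀ s ∈ Set.Ioo (0:ℝ) 1,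
      (∑ l, (∑ i, ψ s * g s i * (Γ s)⁻¹ i l) * Γ s l j) = ψ s * g s j := by
    intro s hs
    have hu : IsUnit (Γ s).det :=
      (Matrix.isUnit_iff_isUnit_det _).1 (hΓinv s ⟨hs.1.le, hs.2⟩)
    have hone : (Γ s)⁻¹ * Γ s = 1 := Matrix.nonsing_inv_mul _ hu
    have h1 : ∀ i, (∑ l, (Γ s)⁻¹ i l * Γ s l j) = if i = j then 1 else 0 := by
      intro i
      have := congrFun (congrFun hone i) j
      simpa [Matrix.mul_apply, Matrix.one_apply] using this
    calc (∑ l, (∑ i, ψ s * g s i * (Γ s)⁻¹ i l) * Γ s l j)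
        = ∑ i, ψ s * g s i * ∑ l, (Γ s)⁻¹ i l * Γ s l j := by
          simp only [Finset.sum_mul]
          rw [Finset.sum_comm]
          simp only [Finset.mul_sum, mul_assoc]
      _ = ψ s * g s j := by
          simp only [h1, mul_ite, mul_one, mul_zero]
          simp [Finset.sum_ite_eq']
  -- Integrability of ψ·g j
  have I1 : Integrable (fun t => ψ t * g t j) μ := by
    have hb : Integrable (fun t => (ψ t ^ 2 + g t j ^ 2) / 2) μ := by
      have h2 : Integrable (fun t => g t j ^ 2) μ := by simpa [sq] using hg2' j j
      exact (hψ2'.add h2).div_const 2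
    refine hb.mono ((hψm.mul (hgm j)).aestronglyMeasurable) ?_
    filter_upwards with t
    rw [Real.norm_eq_abs, Real.norm_eq_abs, abs_mul]
    have h1 : |ψ t| * |g t j| ≤ (|ψ t| ^ 2 + |g t j| ^ 2) / 2 := by
      nlinarith [sq_nonneg (|ψ t| - |g t j|)]
    calc |ψ t| * |g t j| ≤ (|ψ t| ^ 2 + |g t j| ^ 2) / 2 := h1
      _ = (ψ t ^ 2 + g t j ^ 2) / 2 := by rw [sq_abs, sq_abs]
      _ ≤ |(ψ t ^ 2 + g t j ^ 2) / 2| := le_abs_self _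
  -- Integrability of the iterated-integral functions
  have I2 : ∀ l, Integrable (fun t => ∫ s, F l (s, t) ∂μ) μ := fun l =>
    (hFint l).integral_prod_right
  have I3 : ∀ l, Integrable (fun s => ∫ t, F l (s, t) ∂μ) μ := fun l =>
    (hFint l).integral_prod_left
  -- a.e. version of key3 on μ
  have ae1 : ∀ᵐ s ∂μ, s ∈ Set.Ioo (0:ℝ) 1 := by
    have h2 : μ {(1:ℝ)} = 0 :=
      le_antisymm ((Measure.restrict_le_self _).trans_eq (Real.volume_singleton)) zero_le
    have h3 : ∀ᵐ s ∂μ, s ≠ 1 := by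
      rw [ae_iff]
      convert h2 using 2
      ext x; simp
    filter_upwards [ae_restrict_mem hSm, h3] with s hs hs1
    exact ⟨hs.1, lt_of_le_of_ne hs.2 hs1⟩
  -- main computation
  rw [intervalIntegral.integral_of_le zero_le_one]
  have step1 : ∫ t, Lψ t * g t j ∂μ
      = (∫ t, ψ t * g t j ∂μ) - ∑ l, ∫ t, (∫ s, F l (s, t) ∂μ) ∂μ := by
    have hcongr : ∀ᵐ t ∂μ, Lψ t * g t j
        = ψ t * g t j - ∑ l, ∫ s, F l (s, t) ∂μ := by
      filter_upwards [ae_restrict_mem hSm] with t ht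
      rw [hLψ t, sub_mul, Finset.sum_mul]
      congr 1
      refine Finset.sum_congr rfl fun l _ => ?_
      rw [key1 l t ht, mul_assoc]
    rw [integral_congr_ae hcongr, integral_sub I1 (integrable_finset_sum _ fun l _ => I2 l),
      integral_finset_sum _ fun l _ => I2 l]
  have step2 : ∀ l, (∫ t, (∫ s, F l (s, t) ∂μ) ∂μ)
      = ∫ s, (∑ i, ψ s * g s i * (Γ s)⁻¹ i l) * Γ s l j ∂μ := by
    intro l
    have hswap := MeasureTheory.integral_integral_swap
      (f := fun s t => F l (s, t)) (μ := μ) (ν := μ) (by exact hFint l)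
    rw [← hswap]
    refine integral_congr_ae ?_
    filter_upwards [ae_restrict_mem hSm] with s hs
    exact key2 l s hs
  have I4 : ∀ l, Integrable (fun s => (∑ i, ψ s * g s i * (Γ s)⁻¹ i l) * Γ s l j) μ := by
    intro l
    refine (I3 l).congr ?_
    filter_upwards [ae_restrict_mem hSm] with s hs
    exact key2 l s hs
  have step3 : (∑ l, ∫ s, (∑ i, ψ s * g s i * (Γ s)⁻¹ i l) * Γ s l j ∂μ)
      = ∫ t, ψ t * g t j ∂μ := by
    rw [← integral_finset_sum _ fun l _ => I4 l]
    refine integral_congr_ae ?_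
    filter_upwards [ae1] with s hs
    exact key3 s hs
  rw [step1]
  rw [Finset.sum_congr rfl fun l _ => step2 l] at *
  rw [step3]
  ring
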